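/- For any graph G on n vertices, γ_I((G ⊙ K_1) ⊙ K_1) = 3n. -/

import Mathlib

open SimpleGraph Finset
open scoped Classical

/-- An Italian dominating function: values in {0,1,2}, and every vertex with
value 0 has neighbor values summing to at least 2. -/
def IsItalian {V : Type*} [Fintype V] (G : SimpleGraph V) (f : V → ℕ) : Prop :=
  (∀ v, f v ≤ 2) ∧
    ∀ v, f v = 0 → 2 ≤ ∑ u ∈ Finset.univ.filter (fun w => G.Adj v w), f u

/-- The Italian domination number: minimum weight of an Italian dominating function. -/
noncomputable def italianDomNumber {V : Type*} [Fintype V] (G : SimpleGraph V) : ℕ :=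
  sInf {w | ∃ f : V → ℕ, IsItalian G f ∧ ∑ v, f v = w}

/-- The corona `G ⊙ K₁`: attach one pendant vertex (an `inr` copy) to each vertex of `G`. -/
def coronaK1 {V : Type*} (G : SimpleGraph V) : SimpleGraph (V ⊕ V) :=
  SimpleGraph.fromRel (fun a b =>
    match a, b with
    | Sum.inl u, Sum.inl v => G.Adj u v
    | Sum.inl u, Sum.inr v => u = v
    | Sum.inr u, Sum.inl v => u = v
    | Sum.inr _, Sum.inr _ => False)

/-- The corona `G ⊙ H`: one copy of `H` per vertex of `G`, each joined to that vertex. -/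
def corona {V W : Type*} (G : SimpleGraph V) (H : SimpleGraph W) :
    SimpleGraph (V ⊕ V × W) :=
  SimpleGraph.fromRel (fun a b =>
    match a, b with
    | Sum.inl u, Sum.inl v => G.Adj u v
    | Sum.inl u, Sum.inr p => u = p.1
    | Sum.inr p, Sum.inl v => p.1 = v
    | Sum.inr p, Sum.inr q => p.1 = q.1 ∧ H.Adj p.2 q.2)

lemma adj_leaf {V : Type*} (G : SimpleGraph V) (x : V) (w : V ⊕ V) :
    (coronaK1 G).Adj (Sum.inr x) w ↔ w = Sum.inl x := by
  cases w <;> simp [coronaK1, SimpleGraph.fromRel_adj, eq_comm]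

lemma adj_ll {V : Type*} (G : SimpleGraph V) (u v : V) :
    (coronaK1 G).Adj (Sum.inl u) (Sum.inl v) ↔ G.Adj u v := by
  simp only [coronaK1, SimpleGraph.fromRel_adj]
  constructor
  · rintro ⟨h, h1 | h1⟩
    · exact h1
    · exact h1.symm
  · intro h
    exact ⟨by simp [h.ne], Or.inl h⟩

lemma adj_lr {V : Type*} (G : SimpleGraph V) (u v : V) :
    (coronaK1 G).Adj (Sum.inl u) (Sum.inr v) ↔ u = v := by
  simp [coronaK1, SimpleGraph.fromRel_adj, eq_comm]

lemma adj_p {V : Type*} (G : SimpleGraph V) (v : V) (w : (V ⊕ V) ⊕ (V ⊕ V)) :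
    (coronaK1 (coronaK1 G)).Adj (Sum.inl (Sum.inr v)) w ↔
      w = Sum.inl (Sum.inl v) ∨ w = Sum.inr (Sum.inr v) := by
  rcases w with (y | y)
  · rw [adj_ll]
    rw [show (coronaK1 G).Adj (Sum.inr v) y ↔ y = Sum.inl v from adj_leaf G v y]
    cases y <;> simp [eq_comm]
  · rw [adj_lr]
    constructor
    · rintro rfl; exact Or.inr rfl
    · rintro (h | h) <;> simp_all

lemma filter_leaf {V : Type*} [Fintype V] (G : SimpleGraph V) [DecidableEq V] (x : V) :
    Finset.univ.filter (fun w => (coronaK1 G).Adj (Sum.inr x) w) = {Sum.inl x} := by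
  ext w; simp [adj_leaf]

lemma filter_p {V : Type*} [Fintype V] (G : SimpleGraph V) (v : V) :
    Finset.univ.filter (fun w => (coronaK1 (coronaK1 G)).Adj (Sum.inl (Sum.inr v)) w)
      = {Sum.inl (Sum.inl v), Sum.inr (Sum.inr v)} := by
  ext w; simp [adj_p]

theorem italian_double_coronaK1 {V : Type*} [Fintype V] (G : SimpleGraph V) :
    italianDomNumber (coronaK1 (coronaK1 G)) = 3 * Fintype.card V := by
  set n := Fintype.card V
  set K := coronaK1 (coronaK1 G) with hK
  -- the optimal function
  set fopt : (V ⊕ V) ⊕ (V ⊕ V) → ℕ :=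
    Sum.elim (Sum.elim (fun _ => 2) (fun _ => 0)) (Sum.elim (fun _ => 0) (fun _ => 1))
    with hfopt
  have hIt : IsItalian K fopt := by
    constructor
    · rintro ((v | v) | (v | v)) <;> simp [hfopt]
    · rintro ((v | v) | (v | v)) hx
      · simp [hfopt] at hx
      · rw [hK, filter_p, Finset.sum_pair (by simp)]
        simp [hfopt]
      · rw [hK, filter_leaf, Finset.sum_singleton]
        simp [hfopt]
      · simp [hfopt] at hx
  have hsumopt : ∑ v, fopt v = 3 * n := by
    simp only [hfopt, Fintype.sum_sum_type, Sum.elim_inl, Sum.elim_inr,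
      Finset.sum_const, smul_eq_mul, Finset.card_univ]
    ring
  have hmem : 3 * n ∈ {w | ∃ f, IsItalian K f ∧ ∑ v, f v = w} := ⟨fopt, hIt, hsumopt⟩
  refine le_antisymm (Nat.sInf_le hmem) (le_csInf ⟨_, hmem⟩ ?_)
  rintro w ⟨f, ⟨hf2, hdom⟩, rfl⟩
  have key : ∀ v : V, 3 ≤ f (Sum.inl (Sum.inl v)) + f (Sum.inl (Sum.inr v)) +
      f (Sum.inr (Sum.inl v)) + f (Sum.inr (Sum.inr v)) := by
    intro v
    have h1 := hdom (Sum.inr (Sum.inl v))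
    rw [hK, filter_leaf, Finset.sum_singleton] at h1
    have h2 := hdom (Sum.inr (Sum.inr v))
    rw [hK, filter_leaf, Finset.sum_singleton] at h2
    have h3 := hdom (Sum.inl (Sum.inr v))
    rw [hK, filter_p, Finset.sum_pair (by simp)] at h3
    have h1' : 1 ≤ f (Sum.inr (Sum.inl v)) ∨ 2 ≤ f (Sum.inl (Sum.inl v)) := by
      rcases Nat.eq_zero_or_pos (f (Sum.inr (Sum.inl v))) with h | h
      · exact Or.inr (h1 h)
      · exact Or.inl h
    have h2' : 1 ≤ f (Sum.inr (Sum.inr v)) ∨ 2 ≤ f (Sum.inl (Sum.inr v)) := by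
      rcases Nat.eq_zero_or_pos (f (Sum.inr (Sum.inr v))) with h | h
      · exact Or.inr (h2 h)
      · exact Or.inl h
    have h3' : 1 ≤ f (Sum.inl (Sum.inr v)) ∨
        2 ≤ f (Sum.inl (Sum.inl v)) + f (Sum.inr (Sum.inr v)) := by
      rcases Nat.eq_zero_or_pos (f (Sum.inl (Sum.inr v))) with h | h
      · exact Or.inr (h3 h)
      · exact Or.inl h
    rcases h1' with h1' | h1' <;> rcases h2' with h2' | h2' <;>
      rcases h3' with h3' | h3' <;> omega
  have hsum : ∑ x, f x = ∑ v : V, (f (Sum.inl (Sum.inl v)) + f (Sum.inl (Sum.inr v)) +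
      f (Sum.inr (Sum.inl v)) + f (Sum.inr (Sum.inr v))) := by
    simp only [Fintype.sum_sum_type, Finset.sum_add_distrib]
    ring
  rw [hsum]
  calc 3 * n = ∑ _v : V, 3 := by simp [Finset.sum_const, mul_comm]; rfl
    _ ≤ _ := Finset.sum_le_sum fun v _ => key v
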